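/- Let λ > 0 and fix integers i < j. With Ωᵢⱼ⁽ⁿ⁾ as in the equicorrelational one-dimensional Gaussian graphical model, the absolute error satisfies Ωᵢⱼ⁽ⁿ⁾ - e^{-(j-i)λ} = O(e^{-2(n+1)λ}) as n → ∞, where Ωᵢⱼ⁽ⁿ⁾ = e^{-(j-i)λ}·√( (1 - e^{-2(n+1-j)λ})·(1 - e^{-2(n+1+i)λ}) / ((1 - e^{-2(n+1-i)λ})·(1 - e^{-2(n+1+j)λ})) ). -/

import Mathlib

open Filter Asymptotics Real

lemma sqrt_sub_one_abs (x : ℝ) : |Real.sqrt x - 1| ≤ |x - 1| := by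
  rcases le_or_gt 0 x with hx | hx
  · have hs := Real.sqrt_nonneg x
    have h1 : Real.sqrt x - 1 = (x - 1) / (Real.sqrt x + 1) := by
      have hne : Real.sqrt x + 1 ≠ 0 := by positivity
      field_simp
      nlinarith [Real.sq_sqrt hx]
    rw [h1, abs_div, abs_of_nonneg (by linarith : (0:ℝ) ≤ Real.sqrt x + 1)]
    exact div_le_self (abs_nonneg _) (by linarith)
  · rw [Real.sqrt_eq_zero_of_nonpos hx.le]
    rw [abs_of_nonpos (by norm_num : (0:ℝ) - 1 ≤ 0), abs_of_nonpos (by linarith)]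
    linarith

theorem omega_absolute_error (l : ℝ) (hl : 0 < l) (i j : ℤ) (hij : i < j) :
    (fun n : ℕ =>
        Real.exp (-((j : ℝ) - i) * l) *
            Real.sqrt ((1 - Real.exp (-2 * ((n : ℝ) + 1 - j) * l)) *
                (1 - Real.exp (-2 * ((n : ℝ) + 1 + i) * l)) /
              ((1 - Real.exp (-2 * ((n : ℝ) + 1 - i) * l)) *
                (1 - Real.exp (-2 * ((n : ℝ) + 1 + j) * l)))) -
          Real.exp (-((j : ℝ) - i) * l))
      =O[Filter.atTop] (fun n : ℕ => Real.exp (-2 * ((n : ℝ) + 1) * l)) := by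
  set ε : ℕ → ℝ := fun n => Real.exp (-2 * ((n : ℝ) + 1) * l) with hε
  -- exponent tends to -∞
  have hεlim : Tendsto ε atTop (nhds 0) := by
    have h1 : Tendsto (fun n : ℕ => -2 * ((n : ℝ) + 1) * l) atTop atBot := by
      have := (tendsto_natCast_atTop_atTop (R := ℝ)).atTop_add tendsto_const_nhds (C := 1)
      have h2 : Tendsto (fun n : ℕ => ((n : ℝ) + 1) * l) atTop atTop :=
        this.atTop_mul_const hl
      simpa [neg_mul, mul_comm, mul_assoc] using (h2.const_mul_atTop (by norm_num : (0:ℝ) < 2)).const_mul_atTop_of_neg (by norm_num : (-1:ℝ) < 0)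
    exact Real.tendsto_exp_atBot.comp h1
  have hterm : ∀ k : ℝ, (fun n : ℕ => Real.exp (-2 * ((n : ℝ) + 1 + k) * l))
      = fun n => Real.exp (-2 * k * l) * ε n := by
    intro k; funext n; rw [hε, ← Real.exp_add]; ring_nf
  have htermO : ∀ k : ℝ, (fun n : ℕ => Real.exp (-2 * ((n : ℝ) + 1 + k) * l)) =O[atTop] ε := by
    intro k; rw [hterm k]; exact (isBigO_refl ε atTop).const_mul_left _
  have htermlim : ∀ k : ℝ, Tendsto (fun n : ℕ => Real.exp (-2 * ((n : ℝ) + 1 + k) * l)) atTop (nhds 0) := by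
    intro k; rw [hterm k]
    simpa only [mul_zero] using hεlim.const_mul (Real.exp (-2 * k * l))
  -- abbreviations
  set a : ℕ → ℝ := fun n => Real.exp (-2 * ((n : ℝ) + 1 - j) * l)
  set b : ℕ → ℝ := fun n => Real.exp (-2 * ((n : ℝ) + 1 + i) * l)
  set c : ℕ → ℝ := fun n => Real.exp (-2 * ((n : ℝ) + 1 - i) * l)
  set d : ℕ → ℝ := fun n => Real.exp (-2 * ((n : ℝ) + 1 + j) * l)
  have haeq : a = fun n : ℕ => Real.exp (-2 * ((n : ℝ) + 1 + (-j : ℝ)) * l) := by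
    funext n; show Real.exp (-2 * ((n : ℝ) + 1 - j) * l) = _; congr 1
  have hceq : c = fun n : ℕ => Real.exp (-2 * ((n : ℝ) + 1 + (-i : ℝ)) * l) := by
    funext n; show Real.exp (-2 * ((n : ℝ) + 1 - i) * l) = _; congr 1
  have ha : a =O[atTop] ε := haeq ▸ htermO (-j)
  have hb : b =O[atTop] ε := htermO i
  have hc : c =O[atTop] ε := hceq ▸ htermO (-i)
  have hd : d =O[atTop] ε := htermO j
  have hal : Tendsto a atTop (nhds 0) := haeq ▸ htermlim (-j)
  have hbl : Tendsto b atTop (nhds 0) := htermlim i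
  have hcl : Tendsto c atTop (nhds 0) := hceq ▸ htermlim (-i)
  have hdl : Tendsto d atTop (nhds 0) := htermlim j
  set R : ℕ → ℝ := fun n => (1 - a n) * (1 - b n) / ((1 - c n) * (1 - d n)) with hR
  -- D tends to 1
  have hD : Tendsto (fun n => (1 - c n) * (1 - d n)) atTop (nhds 1) := by
    have h1 : Tendsto (fun n => 1 - c n) atTop (nhds (1 - 0)) :=
      (tendsto_const_nhds : Tendsto (fun _ : ℕ => (1:ℝ)) atTop (nhds 1)).sub hcl
    have h2 : Tendsto (fun n => 1 - d n) atTop (nhds (1 - 0)) :=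
      (tendsto_const_nhds : Tendsto (fun _ : ℕ => (1:ℝ)) atTop (nhds 1)).sub hdl
    simpa using h1.mul h2
  have hDinv : Tendsto (fun n => ((1 - c n) * (1 - d n))⁻¹) atTop (nhds 1) := by
    simpa using hD.inv₀ (by norm_num)
  have hDinvO : (fun n => ((1 - c n) * (1 - d n))⁻¹) =O[atTop] (fun _ => (1:ℝ)) :=
    hDinv.isBigO_one ℝ
  -- N - D is O(ε)
  have hNsubD : (fun n => (1 - a n) * (1 - b n) - (1 - c n) * (1 - d n)) =O[atTop] ε := by
    have heq : (fun n => (1 - a n) * (1 - b n) - (1 - c n) * (1 - d n))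
        = fun n => (c n + d n - a n - b n) + (a n * b n - c n * d n) := by
      funext n; ring
    rw [heq]
    have hbO1 : b =O[atTop] (fun _ => (1:ℝ)) := hbl.isBigO_one ℝ
    have hdO1 : d =O[atTop] (fun _ => (1:ℝ)) := hdl.isBigO_one ℝ
    have hab : (fun n => a n * b n) =O[atTop] ε := by
      simpa using (ha.mul hbO1)
    have hcd : (fun n => c n * d n) =O[atTop] ε := by
      simpa using (hc.mul hdO1)
    exact (((hc.add hd).sub ha).sub hb).add (hab.sub hcd)
  -- R - 1 is O(ε)
  have hR1 : (fun n => R n - 1) =O[atTop] ε := by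
    have hEq : (fun n => ((1 - a n) * (1 - b n) - (1 - c n) * (1 - d n)) * ((1 - c n) * (1 - d n))⁻¹)
        =ᶠ[atTop] fun n => R n - 1 := by
      have hDne : ∀ᶠ n in (atTop : Filter ℕ), (1 - c n) * (1 - d n) ≠ 0 :=
        hD.eventually_ne (by norm_num : (1:ℝ) ≠ 0)
      filter_upwards [hDne] with n hn
      field_simp [hR]
      simp only [hR]; rw [sub_div, div_self hn]
    have base : (fun n => ((1 - a n) * (1 - b n) - (1 - c n) * (1 - d n)) * ((1 - c n) * (1 - d n))⁻¹) =O[atTop] ε := by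
      have := hNsubD.mul hDinvO
      simpa using this
    exact base.congr' hEq (EventuallyEq.refl _ _)
  -- final bound
  have hbound : ∀ n : ℕ, ‖Real.exp (-((j : ℝ) - i) * l) * Real.sqrt (R n)
      - Real.exp (-((j : ℝ) - i) * l)‖ ≤ Real.exp (-((j : ℝ) - i) * l) * ‖R n - 1‖ := by
    intro n
    have h1 : Real.exp (-((j : ℝ) - i) * l) * Real.sqrt (R n) - Real.exp (-((j : ℝ) - i) * l)
        = Real.exp (-((j : ℝ) - i) * l) * (Real.sqrt (R n) - 1) := by ring
    rw [h1, norm_mul, Real.norm_eq_abs, Real.norm_eq_abs, Real.norm_eq_abs,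
      abs_of_pos (Real.exp_pos _)]
    exact mul_le_mul_of_nonneg_left (sqrt_sub_one_abs (R n)) (Real.exp_pos _).le
  have : (fun n : ℕ => Real.exp (-((j : ℝ) - i) * l) * Real.sqrt (R n)
      - Real.exp (-((j : ℝ) - i) * l)) =O[atTop] (fun n => R n - 1) :=
    IsBigO.of_bound _ (Eventually.of_forall hbound)
  exact this.trans hR1
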